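/- arXiv:1603.02525 — 2 statements merged into one kernel-verified Lean document; each statement's English description precedes it below -/
import Mathlib

section
/- For any k ≥ 1 and e ∈ {0,1,...,k-1}, the map f := h ∘ g is a bijection between D_{2k}^e and D_{2k}^{e+1}, and for every x ∈ D_{2k}^e the paths x and f(x) differ in exactly two positions (one U-step is changed to a D-step and one D-step to a U-step). -/
set_option maxHeartbeats 1000000


/-- Value of a step: `true` = U-step (+1), `false` = D-step (-1). -/
def stepVal (b : Bool) : ℤ := if b then 1 else -1

/-- Height of the lattice path `x` after its first `i` steps. -/
def pathHeight (x : List Bool) (i : ℕ) : ℤ := ((x.take i).map stepVal).sum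

/-- The step at position `i` (0-indexed) is a U-step. -/
def isU (x : List Bool) (i : ℕ) : Bool := x.getD i true

/-- The step at position `i` (0-indexed) is a D-step. -/
def isD (x : List Bool) (i : ℕ) : Bool := !(x.getD i true)

/-- Number of flaws: D-steps lying below the line y=0 (i.e. starting at height ≤ 0). -/
def flaws (x : List Bool) : ℕ :=
  ((List.range x.length).filter (fun i => isD x i && decide (pathHeight x i ≤ 0))).length

/-- `DyckSet k e` = the set `D_{2k}^e` of Dyck paths with `2k` steps and `e` flaws. -/
def DyckSet (k e : ℕ) : Set (List Bool) :=
  {x | x.length = 2*k ∧ x.count true = k ∧ flaws x = e}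

/-- `LSet k m` = the set `L_{2k,m}` of lattice paths with `2k` steps and `m` U-steps. -/
def LSet (k m : ℕ) : Set (List Bool) :=
  {x | x.length = 2*k ∧ x.count true = m}

/-- `d_c(x)`: number of D-steps of `x` starting on the line `y = c`. -/
def dstart (x : List Bool) (c : ℤ) : ℕ :=
  ((List.range x.length).filter (fun i => isD x i && decide (pathHeight x i = c))).length

/-- `u_c(x)`: number of U-steps of `x` starting on the line `y = c`. -/
def ustart (x : List Bool) (c : ℤ) : ℕ :=
  ((List.range x.length).filter (fun i => isU x i && decide (pathHeight x i = c))).length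

/-- Positions (in increasing order) of D-steps of `x` touching the line `y = c`
(a D-step at position `i` goes from height `pathHeight x i` down to `pathHeight x i - 1`,
so it touches `y = c` iff its start height is `c` or `c+1`). -/
def dtouch (x : List Bool) (c : ℤ) : List ℕ :=
  (List.range x.length).filter
    (fun i => isD x i && (decide (pathHeight x i = c) || decide (pathHeight x i = c+1)))

/-- Positions (in increasing order) of U-steps of `x` touching the line `y = c`
(a U-step at position `i` goes from height `pathHeight x i` up to `pathHeight x i + 1`,
so it touches `y = c` iff its start height is `c` or `c-1`). -/
def utouch (x : List Bool) (c : ℤ) : List ℕ :=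
  (List.range x.length).filter
    (fun i => isU x i && (decide (pathHeight x i = c) || decide (pathHeight x i = c-1)))

/-- Position (0-indexed) flipped by `g`: the `(d_0(x)+1)`-th D-step touching `y=0`. -/
def gIdx (x : List Bool) : ℕ := (dtouch x 0).getD (dstart x 0) 0

/-- The map `g`: flip the `(d_0(x)+1)`-th D-step of `x` touching the line `y=0`. -/
def gMap (x : List Bool) : List Bool := x.set (gIdx x) true

/-- Position (0-indexed) flipped by `h`: the `u_1(x)`-th U-step touching `y=1`. -/
def hIdx (x : List Bool) : ℕ := (utouch x 1).getD (ustart x 1 - 1) 0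

/-- The map `h`: flip the `u_1(x)`-th U-step of `x` touching the line `y=1`. -/
def hMap (x : List Bool) : List Bool := x.set (hIdx x) false

/-- Position (0-indexed) flipped by `g'`: the `d_0(x)`-th D-step touching `y=0`. -/
def g'Idx (x : List Bool) : ℕ := (dtouch x 0).getD (dstart x 0 - 1) 0

/-- The map `g'`: flip the `d_0(x)`-th D-step of `x` touching the line `y=0`. -/
def g'Map (x : List Bool) : List Bool := x.set (g'Idx x) true

/-- Position (0-indexed) flipped by `h'`: the `(u_1(x)+1)`-th U-step touching `y=1`. -/
def h'Idx (x : List Bool) : ℕ := (utouch x 1).getD (ustart x 1) 0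

/-- The map `h'`: flip the `(u_1(x)+1)`-th U-step of `x` touching the line `y=1`. -/
def h'Map (x : List Bool) : List Bool := x.set (h'Idx x) false

/-- The minimum-change map `f := h ∘ g`. -/
def fMap (x : List Bool) : List Bool := hMap (gMap x)

/-- `piSeq n x`: the sequence of (1-indexed) positions flipped by the successive
applications `g, h, g, h, ...` over `n` applications of `f` starting from `x`. -/
def piSeq : ℕ → List Bool → List ℕ
  | 0, _ => []
  | n+1, x => (gIdx x + 1) :: (hIdx (gMap x) + 1) :: piSeq n (fMap x)

/-- Reverse the step sequence and complement every step. -/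
def revComp (x : List Bool) : List Bool := x.reverse.map (fun b => !b)




theorem getD_set_ne (x : List Bool) (p j : ℕ) (b d : Bool) (h : p ≠ j) :
    (x.set p b).getD j d = x.getD j d := by
  rw [List.getD_eq_getElem?_getD, List.getD_eq_getElem?_getD, List.getElem?_set_ne h]

theorem getD_set_self (x : List Bool) (p : ℕ) (b d : Bool) (h : p < x.length) :
    (x.set p b).getD p d = b := by
  rw [List.getD_eq_getElem?_getD, List.getElem?_set_self h]; rfl

theorem pathHeight_zero (x : List Bool) : pathHeight x 0 = 0 := by simp [pathHeight]

theorem pathHeight_succ (x : List Bool) (i : ℕ) (h : i < x.length) :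
    pathHeight x (i+1) = pathHeight x i + stepVal (x.getD i true) := by
  unfold pathHeight
  rw [List.take_succ, List.map_append, List.sum_append, List.getElem?_eq_getElem h]
  rw [List.getD_eq_getElem?_getD, List.getElem?_eq_getElem h]
  simp

theorem pathHeight_eq_sum (x : List Bool) (n : ℕ) :
    pathHeight x n = ∑ j ∈ Finset.range n, (if j < x.length then stepVal (x.getD j true) else 0) := by
  induction n with
  | zero => simp [pathHeight]
  | succ n ih =>
    rw [Finset.sum_range_succ, ← ih]
    by_cases h : n < x.length
    · rw [pathHeight_succ x n h, if_pos h]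
    · rw [if_neg h]
      unfold pathHeight
      rw [List.take_of_length_le (by omega), List.take_of_length_le (by omega)]
      ring

theorem pathHeight_set_le (x : List Bool) (p : ℕ) (b : Bool) (i : ℕ) (h : i ≤ p) :
    pathHeight (x.set p b) i = pathHeight x i := by
  rw [pathHeight_eq_sum, pathHeight_eq_sum]
  apply Finset.sum_congr rfl
  intro j hj
  rw [Finset.mem_range] at hj
  rw [List.length_set, getD_set_ne x p j b true (by omega)]

theorem pathHeight_set_gt (x : List Bool) (p : ℕ) (b : Bool) (i : ℕ) (hp : p < x.length) (h : p < i) :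
    pathHeight (x.set p b) i = pathHeight x i + (stepVal b - stepVal (x.getD p true)) := by
  rw [pathHeight_eq_sum, pathHeight_eq_sum]
  have hc : ∀ j ∈ Finset.range i,
      (if j < (x.set p b).length then stepVal ((x.set p b).getD j true) else 0)
      = (if j < x.length then stepVal (x.getD j true) else 0)
        + (if j = p then stepVal b - stepVal (x.getD p true) else 0) := by
    intro j _
    by_cases hjp : j = p
    · subst hjp
      rw [List.length_set, if_pos hp, if_pos hp, if_pos rfl, getD_set_self x j b true hp]
      ring
    · rw [List.length_set, getD_set_ne x p j b true (Ne.symm hjp), if_neg hjp]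
      ring
  rw [Finset.sum_congr rfl hc, Finset.sum_add_distrib, Finset.sum_ite_eq' (Finset.range i) p]
  rw [if_pos (Finset.mem_range.mpr h)]

/-- count of steps of kind `b` starting at height `c` with position in `[lo,hi)` -/
def hcnt (z : List Bool) (b : Bool) (c : ℤ) (lo hi : ℕ) : ℕ :=
  ((Finset.Ico lo hi).filter (fun i => z.getD i true = b ∧ pathHeight z i = c)).card

/-- count of D-steps starting at height `≤ c` with position in `[lo,hi)` -/
def lcnt (z : List Bool) (c : ℤ) (lo hi : ℕ) : ℕ :=
  ((Finset.Ico lo hi).filter (fun i => z.getD i true = false ∧ pathHeight z i ≤ c)).card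

/-- count of steps of kind `b` touching `[0,1]` with position in `[lo,hi)` -/
def tcnt (z : List Bool) (b : Bool) (lo hi : ℕ) : ℕ :=
  ((Finset.Ico lo hi).filter
    (fun i => z.getD i true = b ∧ (pathHeight z i = 0 ∨ pathHeight z i = 1))).card

theorem hcnt_split (z : List Bool) (b : Bool) (c : ℤ) {lo mid hi : ℕ}
    (h1 : lo ≤ mid) (h2 : mid ≤ hi) :
    hcnt z b c lo hi = hcnt z b c lo mid + hcnt z b c mid hi := by
  unfold hcnt
  rw [← Finset.Ico_union_Ico_eq_Ico h1 h2, Finset.filter_union,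
    Finset.card_union_of_disjoint
      (Finset.disjoint_filter_filter (Finset.Ico_disjoint_Ico_consecutive lo mid hi))]

theorem lcnt_split (z : List Bool) (c : ℤ) {lo mid hi : ℕ} (h1 : lo ≤ mid) (h2 : mid ≤ hi) :
    lcnt z c lo hi = lcnt z c lo mid + lcnt z c mid hi := by
  unfold lcnt
  rw [← Finset.Ico_union_Ico_eq_Ico h1 h2, Finset.filter_union,
    Finset.card_union_of_disjoint
      (Finset.disjoint_filter_filter (Finset.Ico_disjoint_Ico_consecutive lo mid hi))]

theorem tcnt_split (z : List Bool) (b : Bool) {lo mid hi : ℕ} (h1 : lo ≤ mid) (h2 : mid ≤ hi) :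
    tcnt z b lo hi = tcnt z b lo mid + tcnt z b mid hi := by
  unfold tcnt
  rw [← Finset.Ico_union_Ico_eq_Ico h1 h2, Finset.filter_union,
    Finset.card_union_of_disjoint
      (Finset.disjoint_filter_filter (Finset.Ico_disjoint_Ico_consecutive lo mid hi))]

theorem hcnt_single (z : List Bool) (b : Bool) (c : ℤ) (j : ℕ) :
    hcnt z b c j (j+1) = if z.getD j true = b ∧ pathHeight z j = c then 1 else 0 := by
  unfold hcnt
  rw [Nat.Ico_succ_singleton, Finset.filter_singleton]
  split <;> simp

theorem lcnt_single (z : List Bool) (c : ℤ) (j : ℕ) :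
    lcnt z c j (j+1) = if z.getD j true = false ∧ pathHeight z j ≤ c then 1 else 0 := by
  unfold lcnt
  rw [Nat.Ico_succ_singleton, Finset.filter_singleton]
  split <;> simp

theorem tcnt_single (z : List Bool) (b : Bool) (j : ℕ) :
    tcnt z b j (j+1) = if z.getD j true = b ∧ (pathHeight z j = 0 ∨ pathHeight z j = 1) then 1 else 0 := by
  unfold tcnt
  rw [Nat.Ico_succ_singleton, Finset.filter_singleton]
  split <;> simp

theorem tcnt_eq (z : List Bool) (b : Bool) (lo hi : ℕ) :
    tcnt z b lo hi = hcnt z b 0 lo hi + hcnt z b 1 lo hi := by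
  unfold tcnt hcnt
  rw [Finset.filter_congr (q := fun i => (z.getD i true = b ∧ pathHeight z i = 0) ∨ (z.getD i true = b ∧ pathHeight z i = 1)) (fun i _ => by tauto)]
  rw [Finset.filter_or, Finset.card_union_of_disjoint]
  rw [Finset.disjoint_left]
  rintro a ha hb
  rw [Finset.mem_filter] at ha hb
  omega

theorem lcnt_levels (z : List Bool) (lo hi : ℕ) :
    lcnt z 2 lo hi = lcnt z 0 lo hi + hcnt z false 1 lo hi + hcnt z false 2 lo hi := by
  unfold lcnt hcnt
  have key : ∀ i : ℕ, (z.getD i true = false ∧ pathHeight z i ≤ 2) ↔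
      (((z.getD i true = false ∧ pathHeight z i ≤ 0) ∨ (z.getD i true = false ∧ pathHeight z i = 1))
        ∨ (z.getD i true = false ∧ pathHeight z i = 2)) := by
    intro i
    constructor
    · rintro ⟨h1, h2⟩
      rcases lt_or_ge (pathHeight z i) 1 with h | h
      · exact Or.inl (Or.inl ⟨h1, by omega⟩)
      · rcases lt_or_ge (pathHeight z i) 2 with h' | h'
        · exact Or.inl (Or.inr ⟨h1, by omega⟩)
        · exact Or.inr ⟨h1, by omega⟩
    · rintro ((⟨h1, h2⟩ | ⟨h1, h2⟩) | ⟨h1, h2⟩) <;> exact ⟨h1, by omega⟩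
  rw [Finset.filter_congr (fun i _ => key i), Finset.filter_or, Finset.filter_or,
    Finset.card_union_of_disjoint, Finset.card_union_of_disjoint]
  · rw [Finset.disjoint_left]
    rintro a ha hb
    simp only [Finset.mem_union, Finset.mem_filter] at ha hb
    omega
  · rw [Finset.disjoint_left]
    rintro a ha hb
    simp only [Finset.mem_union, Finset.mem_filter] at ha hb
    omega

/-- The crossing identity. -/
theorem crossing (z : List Bool) (c : ℤ) (n : ℕ) (hn : n ≤ z.length) :
    (hcnt z true c 0 n : ℤ) - hcnt z false (c+1) 0 n
      = (if c < pathHeight z n then 1 else 0) - (if c < 0 then 1 else 0) := by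
  induction n with
  | zero => simp [hcnt, pathHeight_zero]
  | succ n ih =>
    have hlt : n < z.length := by omega
    have ih' := ih (by omega)
    rw [hcnt_split z true c (Nat.zero_le n) (Nat.le_succ n),
        hcnt_split z false (c+1) (Nat.zero_le n) (Nat.le_succ n),
        hcnt_single, hcnt_single, pathHeight_succ z n hlt]
    rcases Bool.eq_false_or_eq_true (z.getD n true) with hb | hb <;>
      · rw [hb]
        push_cast
        simp only [stepVal]
        split_ifs <;> simp_all <;> omega


-- ===== sorted filter-of-range lemmas =====
theorem sorted_filter_range (n : ℕ) (p : ℕ → Bool) :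
    ((List.range n).filter p).Pairwise (· < ·) :=
  List.Pairwise.filter p (List.pairwise_lt_range)

theorem mem_filter_range (n : ℕ) (p : ℕ → Bool) (i : ℕ) :
    i ∈ (List.range n).filter p ↔ i < n ∧ p i = true := by
  rw [List.mem_filter, List.mem_range]

theorem count_below (l : List ℕ) (hs : l.Pairwise (· < ·)) :
    ∀ m (h : m < l.length), (l.filter (fun i => decide (i < l[m]))).length = m := by
  induction l with
  | nil => intro m h; simp at h
  | cons a t ih =>
    intro m h
    rcases List.pairwise_cons.mp hs with ⟨ha, ht⟩
    match m with
    | 0 =>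
      simp only [List.getElem_cons_zero, List.filter_cons]
      rw [decide_eq_false (by omega)]
      rw [List.filter_eq_nil_iff.mpr (fun b hb => by have := ha b hb; simp; omega)]
      rfl
    | m+1 =>
      simp only [List.getElem_cons_succ, List.filter_cons]
      rw [decide_eq_true (ha _ (List.getElem_mem _))]
      simp only [if_true, List.length_cons]
      rw [ih ht m (by simpa using h)]

theorem range_eq_filter (n j : ℕ) (h : j ≤ n) :
    List.range j = (List.range n).filter (fun i => decide (i < j)) := by
  induction n with
  | zero => have : j = 0 := by omega
            subst this; rfl
  | succ n ih =>
    rcases Nat.lt_or_ge n j with hn | hn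
    · have : j = n + 1 := by omega
      subst this
      rw [List.filter_eq_self.mpr]
      intro a ha
      simp [List.mem_range.mp ha]
    · rw [List.range_succ, List.filter_append, ← ih hn]
      simp [Nat.not_lt.mpr hn]

theorem count_below_range (n : ℕ) (p : ℕ → Bool) (m : ℕ)
    (h : m < ((List.range n).filter p).length) :
    ((List.range (((List.range n).filter p)[m])).filter p).length = m := by
  set l := (List.range n).filter p with hl
  have hjn : l[m] < n := ((mem_filter_range n p _).mp (List.getElem_mem h)).1
  rw [range_eq_filter n l[m] (le_of_lt hjn), List.filter_filter]
  have : (List.filter (fun a => p a && decide (a < l[m])) (List.range n))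
       = (List.filter (fun a => decide (a < l[m]) && p a) (List.range n)) := by
    apply List.filter_congr
    intro a _
    exact Bool.and_comm _ _
  rw [this, ← List.filter_filter]
  exact count_below l (sorted_filter_range n p) m h

theorem index_of_count (n : ℕ) (p : ℕ → Bool) (j m : ℕ) (hj : p j = true) (hjn : j < n)
    (hc : ((List.range j).filter p).length = m) :
    ∃ (h : m < ((List.range n).filter p).length), ((List.range n).filter p)[m] = j := by
  have hmem : j ∈ (List.range n).filter p := (mem_filter_range n p j).mpr ⟨hjn, hj⟩
  obtain ⟨r, hr, hrj⟩ := List.mem_iff_getElem.mp hmem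
  have := count_below_range n p r hr
  rw [hrj, hc] at this
  subst this
  exact ⟨hr, hrj⟩

theorem strictMono_getElem (l : List ℕ) (hs : l.Pairwise (· < ·)) (a b : ℕ)
    (ha : a < l.length) (hb : b < l.length) (hab : a < b) : l[a] < l[b] := by
  have := hs.sortedLT.strictMono_get (a := ⟨a, ha⟩) (b := ⟨b, hb⟩) (by exact hab)
  simpa using this


theorem filter_range_consec (n : ℕ) (p : ℕ → Bool) (m : ℕ)
    (h : m + 1 < ((List.range n).filter p).length) (i : ℕ)
    (h1 : ((List.range n).filter p)[m]'(by omega) < i)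
    (h2 : i < ((List.range n).filter p)[m+1]'h)
    (hin : i < n) : ¬ p i = true := by
  intro hpi
  have hs : ((List.range n).filter p).Pairwise (· < ·) := sorted_filter_range n p
  have hmem : i ∈ (List.range n).filter p := (mem_filter_range n p i).mpr ⟨hin, hpi⟩
  obtain ⟨r, hr, hrj⟩ := List.mem_iff_getElem.mp hmem
  have e1 : m < r := by
    by_contra hc
    push_neg at hc
    rcases eq_or_lt_of_le hc with hc | hc
    · subst hc; omega
    · have := strictMono_getElem _ hs r m hr (by omega) hc
      omega
  have e2 : r < m + 1 := by
    by_contra hc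
    push_neg at hc
    rcases eq_or_lt_of_le hc with hc | hc
    · subst hc; omega
    · have := strictMono_getElem _ hs (m+1) r h hr hc
      omega
  omega


-- ===== bridge between List.filter length and Finset card =====
theorem length_filter_eq_card (n : ℕ) (p : ℕ → Bool) (P : ℕ → Prop) [DecidablePred P]
    (h : ∀ i, i < n → (p i = true ↔ P i)) :
    ((List.range n).filter p).length = ((Finset.range n).filter P).card := by
  induction n with
  | zero => simp
  | succ n ih =>
    rw [List.range_succ, List.filter_append, List.length_append, Finset.range_add_one,
      Finset.filter_insert]
    have hn := h n (by omega)
    have ih' := ih (fun i hi => h i (by omega))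
    by_cases hp : P n
    · rw [if_pos hp, Finset.card_insert_of_notMem (by simp), ← ih']
      have : p n = true := hn.mpr hp
      simp [List.filter_singleton, this]
    · rw [if_neg hp, ← ih']
      have : p n = false := by
        cases hpn : p n
        · rfl
        · exact absurd (hn.mp hpn) hp
      simp [List.filter_singleton, this]

-- ===== set-transfer lemmas =====
theorem hcnt_set_le (z : List Bool) (p : ℕ) (b b' : Bool) (c : ℤ) (lo hi : ℕ) (hhi : hi ≤ p) :
    hcnt (z.set p b) b' c lo hi = hcnt z b' c lo hi := by
  unfold hcnt
  congr 1
  apply Finset.filter_congr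
  intro i hi
  rw [Finset.mem_Ico] at hi
  rw [getD_set_ne z p i b true (by omega), pathHeight_set_le z p b i (by omega)]

theorem lcnt_set_le (z : List Bool) (p : ℕ) (b : Bool) (c : ℤ) (lo hi : ℕ) (hhi : hi ≤ p) :
    lcnt (z.set p b) c lo hi = lcnt z c lo hi := by
  unfold lcnt
  congr 1
  apply Finset.filter_congr
  intro i hi
  rw [Finset.mem_Ico] at hi
  rw [getD_set_ne z p i b true (by omega), pathHeight_set_le z p b i (by omega)]

theorem tcnt_set_le (z : List Bool) (p : ℕ) (b b' : Bool) (lo hi : ℕ) (hhi : hi ≤ p) :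
    tcnt (z.set p b) b' lo hi = tcnt z b' lo hi := by
  unfold tcnt
  congr 1
  apply Finset.filter_congr
  intro i hi
  rw [Finset.mem_Ico] at hi
  rw [getD_set_ne z p i b true (by omega), pathHeight_set_le z p b i (by omega)]

theorem height_set_true (z : List Bool) (p : ℕ) (hp : p < z.length)
    (hzp : z.getD p true = false) (i : ℕ) (h : p < i) :
    pathHeight (z.set p true) i = pathHeight z i + 2 := by
  rw [pathHeight_set_gt z p true i hp h, hzp]
  simp [stepVal]
  try ring

theorem height_set_false (z : List Bool) (p : ℕ) (hp : p < z.length)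
    (hzp : z.getD p true = true) (i : ℕ) (h : p < i) :
    pathHeight (z.set p false) i = pathHeight z i - 2 := by
  rw [pathHeight_set_gt z p false i hp h, hzp]
  simp [stepVal]
  try ring

theorem hcnt_set_gt_true (z : List Bool) (p : ℕ) (hp : p < z.length)
    (hzp : z.getD p true = false) (b' : Bool) (c : ℤ) (lo hi : ℕ) (hlo : p < lo) :
    hcnt (z.set p true) b' c lo hi = hcnt z b' (c - 2) lo hi := by
  unfold hcnt
  congr 1
  apply Finset.filter_congr
  intro i hi
  rw [Finset.mem_Ico] at hi
  rw [getD_set_ne z p i true true (by omega), height_set_true z p hp hzp i (by omega)]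
  constructor <;> (rintro ⟨h1, h2⟩; exact ⟨h1, by omega⟩)

theorem hcnt_set_gt_false (z : List Bool) (p : ℕ) (hp : p < z.length)
    (hzp : z.getD p true = true) (b' : Bool) (c : ℤ) (lo hi : ℕ) (hlo : p < lo) :
    hcnt (z.set p false) b' c lo hi = hcnt z b' (c + 2) lo hi := by
  unfold hcnt
  congr 1
  apply Finset.filter_congr
  intro i hi
  rw [Finset.mem_Ico] at hi
  rw [getD_set_ne z p i false true (by omega), height_set_false z p hp hzp i (by omega)]
  constructor <;> (rintro ⟨h1, h2⟩; exact ⟨h1, by omega⟩)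

theorem lcnt_set_gt_true (z : List Bool) (p : ℕ) (hp : p < z.length)
    (hzp : z.getD p true = false) (c : ℤ) (lo hi : ℕ) (hlo : p < lo) :
    lcnt (z.set p true) c lo hi = lcnt z (c - 2) lo hi := by
  unfold lcnt
  congr 1
  apply Finset.filter_congr
  intro i hi
  rw [Finset.mem_Ico] at hi
  rw [getD_set_ne z p i true true (by omega), height_set_true z p hp hzp i (by omega)]
  constructor <;> (rintro ⟨h1, h2⟩; exact ⟨h1, by omega⟩)

theorem lcnt_set_gt_false (z : List Bool) (p : ℕ) (hp : p < z.length)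
    (hzp : z.getD p true = true) (c : ℤ) (lo hi : ℕ) (hlo : p < lo) :
    lcnt (z.set p false) c lo hi = lcnt z (c + 2) lo hi := by
  unfold lcnt
  congr 1
  apply Finset.filter_congr
  intro i hi
  rw [Finset.mem_Ico] at hi
  rw [getD_set_ne z p i false true (by omega), height_set_false z p hp hzp i (by omega)]
  constructor <;> (rintro ⟨h1, h2⟩; exact ⟨h1, by omega⟩)

-- ===== total-count lemmas =====
/-- number of positions in `[lo,hi)` holding `b` -/
def bcnt (z : List Bool) (b : Bool) (lo hi : ℕ) : ℕ :=
  ((Finset.Ico lo hi).filter (fun i => z.getD i true = b)).card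

theorem bcnt_add (z : List Bool) (lo hi : ℕ) :
    bcnt z true lo hi + bcnt z false lo hi = hi - lo := by
  unfold bcnt
  have hco : Finset.filter (fun i => z.getD i true = false) (Finset.Ico lo hi)
      = Finset.filter (fun i => ¬ (z.getD i true = true)) (Finset.Ico lo hi) :=
    Finset.filter_congr (fun i _ => by simp)
  rw [hco, Finset.card_filter_add_card_filter_not, Nat.card_Ico]

theorem bcnt_height (z : List Bool) (n : ℕ) (hn : n ≤ z.length) :
    (bcnt z true 0 n : ℤ) - bcnt z false 0 n = pathHeight z n := by
  induction n with
  | zero => simp [bcnt, pathHeight_zero]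
  | succ n ih =>
    have hlt : n < z.length := by omega
    have ih' := ih (by omega)
    have s1 : bcnt z true 0 (n+1) = bcnt z true 0 n + bcnt z true n (n+1) := by
      unfold bcnt
      rw [← Finset.Ico_union_Ico_eq_Ico (Nat.zero_le n) (Nat.le_succ n), Finset.filter_union,
        Finset.card_union_of_disjoint
          (Finset.disjoint_filter_filter (Finset.Ico_disjoint_Ico_consecutive 0 n (n+1)))]
    have s2 : bcnt z false 0 (n+1) = bcnt z false 0 n + bcnt z false n (n+1) := by
      unfold bcnt
      rw [← Finset.Ico_union_Ico_eq_Ico (Nat.zero_le n) (Nat.le_succ n), Finset.filter_union,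
        Finset.card_union_of_disjoint
          (Finset.disjoint_filter_filter (Finset.Ico_disjoint_Ico_consecutive 0 n (n+1)))]
    have e1 : bcnt z true n (n+1) = if z.getD n true = true then 1 else 0 := by
      unfold bcnt
      rw [Nat.Ico_succ_singleton, Finset.filter_singleton]
      split <;> simp
    have e2 : bcnt z false n (n+1) = if z.getD n true = false then 1 else 0 := by
      unfold bcnt
      rw [Nat.Ico_succ_singleton, Finset.filter_singleton]
      split <;> simp
    rw [s1, s2, e1, e2, pathHeight_succ z n hlt, ← ih']
    rcases Bool.eq_false_or_eq_true (z.getD n true) with hb | hb <;>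
      · rw [hb]
        push_cast
        simp [stepVal]
        ring

theorem sum_map_stepVal (x : List Bool) :
    (x.map stepVal).sum = (x.count true : ℤ) - x.count false := by
  induction x with
  | nil => simp
  | cons a t ih =>
    rcases Bool.eq_false_or_eq_true a with hb | hb <;>
      · subst hb
        simp [List.count_cons, ih, stepVal]
        ring

theorem count_add_count (x : List Bool) : x.count true + x.count false = x.length := by
  induction x with
  | nil => simp
  | cons a t ih =>
    rcases Bool.eq_false_or_eq_true a with hb | hb <;>
      · subst hb
        simp [List.count_cons]
        omega

theorem pathHeight_length (x : List Bool) :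
    pathHeight x x.length = (x.count true : ℤ) - x.count false := by
  rw [pathHeight, List.take_of_length_le (le_refl _), sum_map_stepVal]

theorem count_false_eq_bcnt (x : List Bool) :
    x.count false = bcnt x false 0 x.length := by
  have h1 := bcnt_add x 0 x.length
  have h2 := bcnt_height x x.length (le_refl _)
  have h3 := pathHeight_length x
  have h4 := count_add_count x
  omega

theorem count_true_eq_bcnt (x : List Bool) :
    x.count true = bcnt x true 0 x.length := by
  have h1 := bcnt_add x 0 x.length
  have h2 := bcnt_height x x.length (le_refl _)
  have h3 := pathHeight_length x
  have h4 := count_add_count x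
  omega

theorem count_set_true (x : List Bool) (p : ℕ) (h : p < x.length) (hf : x.getD p true = false) :
    (x.set p true).count true = x.count true + 1 := by
  induction x generalizing p with
  | nil => simp at h
  | cons a t ih =>
    match p with
    | 0 =>
      simp only [List.getD_cons_zero] at hf
      subst hf
      simp [List.count_cons]
    | p+1 =>
      simp only [List.getD_cons_succ] at hf
      simp only [List.set_cons_succ, List.count_cons]
      rw [ih p (by simpa using h) hf]
      omega

theorem count_set_false (x : List Bool) (p : ℕ) (h : p < x.length) (ht : x.getD p true = true) :
    (x.set p false).count true + 1 = x.count true := by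
  induction x generalizing p with
  | nil => simp at h
  | cons a t ih =>
    match p with
    | 0 =>
      simp only [List.getD_cons_zero] at ht
      subst ht
      simp [List.count_cons]
    | p+1 =>
      simp only [List.getD_cons_succ] at ht
      simp only [List.set_cons_succ, List.count_cons]
      rw [← ih p (by simpa using h) ht]
      omega

theorem set_getD_self (x : List Bool) (p : ℕ) (b : Bool) (h : x.getD p true = b) :
    x.set p b = x := by
  apply List.ext_getElem (by simp)
  intro i h1 h2
  rw [List.getElem_set]
  split
  · next heq =>
    subst heq
    rw [← h, List.getD_eq_getElem x true h2]
  · rfl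

-- ===== def equalities =====
theorem flaws_eq (x : List Bool) : flaws x = lcnt x 0 0 x.length := by
  unfold flaws lcnt
  rw [← Finset.range_eq_Ico]
  exact length_filter_eq_card _ _ _ (fun i _ => by simp [isD])

theorem dstart_eq (x : List Bool) (c : ℤ) : dstart x c = hcnt x false c 0 x.length := by
  unfold dstart hcnt
  rw [← Finset.range_eq_Ico]
  exact length_filter_eq_card _ _ _ (fun i _ => by simp [isD])

theorem ustart_eq (x : List Bool) (c : ℤ) : ustart x c = hcnt x true c 0 x.length := by
  unfold ustart hcnt
  rw [← Finset.range_eq_Ico]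
  exact length_filter_eq_card _ _ _ (fun i _ => by simp [isU])

theorem dtouch_pred_iff (x : List Bool) (i : ℕ) :
    ((fun i => isD x i && (decide (pathHeight x i = 0) || decide (pathHeight x i = 0+1))) i = true)
      ↔ (x.getD i true = false ∧ (pathHeight x i = 0 ∨ pathHeight x i = 1)) := by
  simp [isD]

theorem utouch_pred_iff (x : List Bool) (i : ℕ) :
    ((fun i => isU x i && (decide (pathHeight x i = 1) || decide (pathHeight x i = 1-1))) i = true)
      ↔ (x.getD i true = true ∧ (pathHeight x i = 0 ∨ pathHeight x i = 1)) := by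
  simp [isU]
  tauto

theorem dtouch_count (x : List Bool) (j : ℕ) :
    ((List.range j).filter
      (fun i => isD x i && (decide (pathHeight x i = 0) || decide (pathHeight x i = 0+1)))).length
      = tcnt x false 0 j := by
  unfold tcnt
  rw [← Finset.range_eq_Ico]
  exact length_filter_eq_card _ _ _ (fun i _ => dtouch_pred_iff x i)

theorem utouch_count (x : List Bool) (j : ℕ) :
    ((List.range j).filter
      (fun i => isU x i && (decide (pathHeight x i = 1) || decide (pathHeight x i = 1-1)))).length
      = tcnt x true 0 j := by
  unfold tcnt
  rw [← Finset.range_eq_Ico]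
  exact length_filter_eq_card _ _ _ (fun i _ => utouch_pred_iff x i)

theorem dtouch_def (x : List Bool) : dtouch x 0 = (List.range x.length).filter
    (fun i => isD x i && (decide (pathHeight x i = 0) || decide (pathHeight x i = 0+1))) := rfl

theorem utouch_def (x : List Bool) : utouch x 1 = (List.range x.length).filter
    (fun i => isU x i && (decide (pathHeight x i = 1) || decide (pathHeight x i = 1-1))) := rfl

theorem dtouch_len (x : List Bool) : (dtouch x 0).length = tcnt x false 0 x.length := by
  rw [dtouch_def]; exact dtouch_count x x.length

theorem utouch_len (x : List Bool) : (utouch x 1).length = tcnt x true 0 x.length := by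
  rw [utouch_def]; exact utouch_count x x.length

-- ===== crossing on a segment =====
theorem crossing_seg (z : List Bool) (c : ℤ) (a b : ℕ) (hab : a ≤ b) (hb : b ≤ z.length) :
    (hcnt z true c a b : ℤ) - hcnt z false (c+1) a b
      = (if c < pathHeight z b then 1 else 0) - (if c < pathHeight z a then 1 else 0) := by
  have h1 := crossing z c a (le_trans hab hb)
  have h2 := crossing z c b hb
  have e1 := hcnt_split z true c (Nat.zero_le a) hab
  have e2 := hcnt_split z false (c+1) (Nat.zero_le a) hab
  push_cast [e1, e2] at h2
  linarith

-- ===== existence lemmas =====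
theorem exists_dstart_one (x : List Bool) (hend : pathHeight x x.length = 0)
    (hlt : lcnt x 0 0 x.length < bcnt x false 0 x.length) :
    1 ≤ hcnt x false 1 0 x.length := by
  -- find a D-step starting at height ≥ 1
  have hw : ∃ i, i ∈ Finset.Ico 0 x.length ∧ x.getD i true = false ∧ ¬ (pathHeight x i ≤ 0) := by
    by_contra hc
    push_neg at hc
    have : lcnt x 0 0 x.length = bcnt x false 0 x.length := by
      unfold lcnt bcnt
      congr 1
      apply Finset.filter_congr
      intro i hi
      constructor
      · rintro ⟨h1, _⟩; exact h1
      · intro h1; exact ⟨h1, hc i hi h1⟩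
    omega
  obtain ⟨i, hi, hD, hH⟩ := hw
  rw [Finset.mem_Ico] at hi
  push_neg at hH
  -- crossing at level 0 up to i gives a U-step at height 0 before i
  have c1 := crossing x 0 i (le_of_lt hi.2)
  rw [if_pos (by omega : (0:ℤ) < pathHeight x i), if_neg (by omega : ¬ (0:ℤ) < 0)] at c1
  -- also i itself is a D-step at height ≥ 1: included in hcnt false 1? not exactly; use total crossing
  have c2 := crossing x 0 x.length (le_refl _)
  rw [hend, if_neg (by omega : ¬ (0:ℤ) < 0)] at c2
  have e1 := hcnt_split x true 0 (Nat.zero_le i) (le_of_lt hi.2)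
  norm_num at c1 c2
  omega

theorem exists_dstart_zero (x : List Bool) (hpos : 1 ≤ lcnt x 0 0 x.length) :
    1 ≤ hcnt x false 0 0 x.length := by
  have hne : (Finset.filter (fun i => x.getD i true = false ∧ pathHeight x i ≤ 0)
      (Finset.Ico 0 x.length)).Nonempty := by
    rw [← Finset.card_pos]
    exact hpos
  obtain ⟨i, hi⟩ := hne
  rw [Finset.mem_filter, Finset.mem_Ico] at hi
  obtain ⟨⟨_, hin⟩, hD, hH⟩ := hi
  rcases eq_or_lt_of_le hH with h0 | h0
  · -- i itself is a D at height 0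
    have : i ∈ Finset.filter (fun j => x.getD j true = false ∧ pathHeight x j = 0)
        (Finset.Ico 0 x.length) := by
      rw [Finset.mem_filter, Finset.mem_Ico]
      exact ⟨⟨Nat.zero_le i, hin⟩, hD, h0⟩
    have := Finset.card_pos.mpr ⟨i, this⟩
    unfold hcnt
    omega
  · -- height < 0: there is a down-crossing of level -1/2 before i
    have c1 := crossing x (-1) i (le_of_lt hin)
    rw [if_neg (by omega : ¬ (-1:ℤ) < pathHeight x i), if_pos (by omega : (-1:ℤ) < 0)] at c1
    norm_num at c1
    have e1 := hcnt_split x false 0 (Nat.zero_le i) (le_of_lt hin)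
    have e0 : hcnt x false (-1 + 1) 0 i = hcnt x false 0 0 i := by norm_num
    omega


-- ===== the central configuration =====
/-- The configuration of the intermediate path `z` (with one extra U-step) together with the two
flip positions `q < p`. -/
def MidGood (z : List Bool) (q p : ℕ) : Prop :=
  q < p ∧ p < z.length ∧ z.getD q true = true ∧ z.getD p true = true ∧
  (pathHeight z q = 0 ∨ pathHeight z q = 1) ∧ (pathHeight z p = 0 ∨ pathHeight z p = 1) ∧
  (∀ i, q < i → i < p → z.getD i true = true → ¬(pathHeight z i = 0 ∨ pathHeight z i = 1)) ∧
  tcnt z true 0 q + 1 = hcnt z true 1 0 z.length ∧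
  pathHeight z z.length = 2

theorem MidGood.useg0 {z : List Bool} {q p : ℕ} (hg : MidGood z q p) :
    hcnt z true 0 (q+1) p = 0 := by
  obtain ⟨hqp, hpn, hzq, hzp, hHq, hHp, hnt, hcount, hend⟩ := hg
  unfold hcnt
  rw [Finset.card_eq_zero, Finset.filter_eq_empty_iff]
  intro i hi
  rw [Finset.mem_Ico] at hi
  rintro ⟨h1, h2⟩
  exact hnt i (by omega) hi.2 h1 (Or.inl h2)

theorem MidGood.useg1 {z : List Bool} {q p : ℕ} (hg : MidGood z q p) :
    hcnt z true 1 (q+1) p = 0 := by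
  obtain ⟨hqp, hpn, hzq, hzp, hHq, hHp, hnt, hcount, hend⟩ := hg
  unfold hcnt
  rw [Finset.card_eq_zero, Finset.filter_eq_empty_iff]
  intro i hi
  rw [Finset.mem_Ico] at hi
  rintro ⟨h1, h2⟩
  exact hnt i (by omega) hi.2 h1 (Or.inr h2)

theorem MidGood.hq1 {z : List Bool} {q p : ℕ} (hg : MidGood z q p) :
    pathHeight z (q+1) = pathHeight z q + 1 := by
  obtain ⟨hqp, hpn, hzq, _⟩ := hg
  rw [pathHeight_succ z q (by omega), hzq]
  simp [stepVal]

theorem MidGood.tcnt_p {z : List Bool} {q p : ℕ} (hg : MidGood z q p) :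
    tcnt z true 0 p = tcnt z true 0 q + 1 := by
  have F0 := hg.useg0
  have F1 := hg.useg1
  obtain ⟨hqp, hpn, hzq, hzp, hHq, hHp, hnt, hcount, hend⟩ := hg
  have s1 := tcnt_split z true (Nat.zero_le q) (show q ≤ p by omega)
  have s2 := tcnt_split z true (show q ≤ q+1 by omega) (show q+1 ≤ p by omega)
  have m1 : tcnt z true q (q+1) = 1 := by
    rw [tcnt_single, if_pos ⟨hzq, hHq⟩]
  have m2 : tcnt z true (q+1) p = 0 := by
    rw [tcnt_eq, F0, F1]
  omega

theorem flaw_step {z : List Bool} {q p : ℕ} (hg : MidGood z q p) :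
    lcnt (z.set q false) 0 0 z.length = lcnt (z.set p false) 0 0 z.length + 1 := by
  have F0 := hg.useg0
  have F1 := hg.useg1
  have Hq1 := hg.hq1
  obtain ⟨hqp, hpn, hzq, hzp, hHq, hHp, hnt, hcount, hend⟩ := hg
  have hqn : q < z.length := by omega
  have A1 : lcnt (z.set p false) 0 0 z.length
      = lcnt (z.set p false) 0 0 p + lcnt (z.set p false) 0 p (p+1)
        + lcnt (z.set p false) 0 (p+1) z.length := by
    rw [← lcnt_split (z.set p false) 0 (Nat.zero_le p) (show p ≤ p+1 by omega),
        ← lcnt_split (z.set p false) 0 (Nat.zero_le (p+1)) (show p+1 ≤ z.length by omega)]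
  have A2 : lcnt (z.set p false) 0 0 p = lcnt z 0 0 p :=
    lcnt_set_le z p false 0 0 p (le_refl p)
  have A3 : lcnt (z.set p false) 0 (p+1) z.length = lcnt z 2 (p+1) z.length := by
    rw [lcnt_set_gt_false z p hpn hzp 0 (p+1) z.length (by omega)]
    norm_num
  have A4 : lcnt (z.set p false) 0 p (p+1) = if pathHeight z p ≤ 0 then 1 else 0 := by
    rw [lcnt_single, getD_set_self z p false true hpn, pathHeight_set_le z p false p (le_refl p)]
    simp
  have B1 : lcnt (z.set q false) 0 0 z.length
      = lcnt (z.set q false) 0 0 q + lcnt (z.set q false) 0 q (q+1)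
        + lcnt (z.set q false) 0 (q+1) z.length := by
    rw [← lcnt_split (z.set q false) 0 (Nat.zero_le q) (show q ≤ q+1 by omega),
        ← lcnt_split (z.set q false) 0 (Nat.zero_le (q+1)) (show q+1 ≤ z.length by omega)]
  have B2 : lcnt (z.set q false) 0 0 q = lcnt z 0 0 q :=
    lcnt_set_le z q false 0 0 q (le_refl q)
  have B3 : lcnt (z.set q false) 0 (q+1) z.length = lcnt z 2 (q+1) z.length := by
    rw [lcnt_set_gt_false z q hqn hzq 0 (q+1) z.length (by omega)]
    norm_num
  have B4 : lcnt (z.set q false) 0 q (q+1) = if pathHeight z q ≤ 0 then 1 else 0 := by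
    rw [lcnt_single, getD_set_self z q false true hqn, pathHeight_set_le z q false q (le_refl q)]
    simp
  have C : lcnt z 0 0 p = lcnt z 0 0 q + lcnt z 0 q (q+1) + lcnt z 0 (q+1) p := by
    rw [← lcnt_split z 0 (Nat.zero_le q) (show q ≤ q+1 by omega),
        ← lcnt_split z 0 (Nat.zero_le (q+1)) (show q+1 ≤ p by omega)]
  have mC : lcnt z 0 q (q+1) = 0 := by
    rw [lcnt_single, if_neg]
    rintro ⟨h, _⟩
    rw [hzq] at h
    exact Bool.noConfusion h
  have D : lcnt z 2 (q+1) z.length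
      = lcnt z 2 (q+1) p + lcnt z 2 p (p+1) + lcnt z 2 (p+1) z.length := by
    rw [← lcnt_split z 2 (show q+1 ≤ p by omega) (show p ≤ p+1 by omega),
        ← lcnt_split z 2 (show q+1 ≤ p+1 by omega) (show p+1 ≤ z.length by omega)]
  have mD : lcnt z 2 p (p+1) = 0 := by
    rw [lcnt_single, if_neg]
    rintro ⟨h, _⟩
    rw [hzp] at h
    exact Bool.noConfusion h
  have E := lcnt_levels z (q+1) p
  have G := crossing_seg z 0 (q+1) p (by omega) (by omega)
  have Hc := crossing_seg z 1 (q+1) p (by omega) (by omega)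
  rw [F0, Hq1] at G
  rw [F1, Hq1] at Hc
  norm_num at G Hc
  rcases hHq with h1 | h1 <;> rcases hHp with h2 | h2 <;>
    simp only [h1, h2] at * <;> split_ifs at * <;> omega

theorem x_char {z : List Bool} {q p : ℕ} (hg : MidGood z q p) :
    tcnt (z.set p false) false 0 p = hcnt (z.set p false) false 0 0 z.length := by
  have Tp := hg.tcnt_p
  obtain ⟨hqp, hpn, hzq, hzp, hHq, hHp, hnt, hcount, hend⟩ := hg
  have L : tcnt (z.set p false) false 0 p
      = hcnt z false 0 0 p + hcnt z false 1 0 p := by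
    rw [tcnt_set_le z p false false 0 p (le_refl p), tcnt_eq]
  have R1 : hcnt (z.set p false) false 0 0 z.length
      = hcnt (z.set p false) false 0 0 p + hcnt (z.set p false) false 0 p (p+1)
        + hcnt (z.set p false) false 0 (p+1) z.length := by
    rw [← hcnt_split (z.set p false) false 0 (Nat.zero_le p) (show p ≤ p+1 by omega),
        ← hcnt_split (z.set p false) false 0 (Nat.zero_le (p+1)) (show p+1 ≤ z.length by omega)]
  have R2 : hcnt (z.set p false) false 0 0 p = hcnt z false 0 0 p :=
    hcnt_set_le z p false false 0 0 p (le_refl p)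
  have R3 : hcnt (z.set p false) false 0 (p+1) z.length = hcnt z false 2 (p+1) z.length := by
    rw [hcnt_set_gt_false z p hpn hzp false 0 (p+1) z.length (by omega)]
    norm_num
  have R4 : hcnt (z.set p false) false 0 p (p+1) = if pathHeight z p = 0 then 1 else 0 := by
    rw [hcnt_single, getD_set_self z p false true hpn, pathHeight_set_le z p false p (le_refl p)]
    simp
  have c1 := crossing z 1 z.length (le_refl _)
  rw [hend] at c1
  norm_num at c1
  have c2 := crossing z 1 p (by omega)
  have c3 := crossing z 0 p (by omega)
  norm_num at c2 c3
  have s1 : hcnt z false 2 0 z.length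
      = hcnt z false 2 0 p + hcnt z false 2 p (p+1) + hcnt z false 2 (p+1) z.length := by
    rw [← hcnt_split z false 2 (Nat.zero_le p) (show p ≤ p+1 by omega),
        ← hcnt_split z false 2 (Nat.zero_le (p+1)) (show p+1 ≤ z.length by omega)]
  have m1 : hcnt z false 2 p (p+1) = 0 := by
    rw [hcnt_single, if_neg]
    rintro ⟨h, _⟩
    rw [hzp] at h
    exact Bool.noConfusion h
  have TE := tcnt_eq z true 0 p
  rw [Tp, hcount] at TE
  rcases hHp with h2 | h2 <;>
    simp only [h2] at * <;> split_ifs at * <;> omega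

theorem y_char {z : List Bool} {q p : ℕ} (hg : MidGood z q p) :
    tcnt (z.set q false) false 0 q + 1 = hcnt (z.set q false) false 0 0 z.length := by
  obtain ⟨hqp, hpn, hzq, hzp, hHq, hHp, hnt, hcount, hend⟩ := hg
  have hqn : q < z.length := by omega
  have L : tcnt (z.set q false) false 0 q
      = hcnt z false 0 0 q + hcnt z false 1 0 q := by
    rw [tcnt_set_le z q false false 0 q (le_refl q), tcnt_eq]
  have R1 : hcnt (z.set q false) false 0 0 z.length
      = hcnt (z.set q false) false 0 0 q + hcnt (z.set q false) false 0 q (q+1)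
        + hcnt (z.set q false) false 0 (q+1) z.length := by
    rw [← hcnt_split (z.set q false) false 0 (Nat.zero_le q) (show q ≤ q+1 by omega),
        ← hcnt_split (z.set q false) false 0 (Nat.zero_le (q+1)) (show q+1 ≤ z.length by omega)]
  have R2 : hcnt (z.set q false) false 0 0 q = hcnt z false 0 0 q :=
    hcnt_set_le z q false false 0 0 q (le_refl q)
  have R3 : hcnt (z.set q false) false 0 (q+1) z.length = hcnt z false 2 (q+1) z.length := by
    rw [hcnt_set_gt_false z q hqn hzq false 0 (q+1) z.length (by omega)]
    norm_num
  have R4 : hcnt (z.set q false) false 0 q (q+1) = if pathHeight z q = 0 then 1 else 0 := by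
    rw [hcnt_single, getD_set_self z q false true hqn, pathHeight_set_le z q false q (le_refl q)]
    simp
  have c1 := crossing z 1 z.length (le_refl _)
  rw [hend] at c1
  norm_num at c1
  have c2 := crossing z 1 q (by omega)
  have c3 := crossing z 0 q (by omega)
  norm_num at c2 c3
  have s1 : hcnt z false 2 0 z.length
      = hcnt z false 2 0 q + hcnt z false 2 q (q+1) + hcnt z false 2 (q+1) z.length := by
    rw [← hcnt_split z false 2 (Nat.zero_le q) (show q ≤ q+1 by omega),
        ← hcnt_split z false 2 (Nat.zero_le (q+1)) (show q+1 ≤ z.length by omega)]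
  have m1 : hcnt z false 2 q (q+1) = 0 := by
    rw [hcnt_single, if_neg]
    rintro ⟨h, _⟩
    rw [hzq] at h
    exact Bool.noConfusion h
  have TE := tcnt_eq z true 0 q
  rw [← hcount] at c1
  rcases hHq with h1 | h1 <;>
    simp only [h1] at * <;> split_ifs at * <;> omega

-- ===== index identities from MidGood =====
theorem MidGood.hIdx_eq {z : List Bool} {q p : ℕ} (hg : MidGood z q p) : hIdx z = q := by
  obtain ⟨hqp, hpn, hzq, hzp, hHq, hHp, hnt, hcount, hend⟩ := hg
  have hpred : (fun i => isU z i && (decide (pathHeight z i = 1) || decide (pathHeight z i = 1-1))) q = true :=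
    (utouch_pred_iff z q).mpr ⟨hzq, hHq⟩
  have hcnt' : ((List.range q).filter
      (fun i => isU z i && (decide (pathHeight z i = 1) || decide (pathHeight z i = 1-1)))).length
      = hcnt z true 1 0 z.length - 1 := by
    rw [utouch_count]
    omega
  obtain ⟨h, heq⟩ := index_of_count z.length _ q (hcnt z true 1 0 z.length - 1) hpred
    (by omega) hcnt'
  unfold hIdx
  rw [ustart_eq, utouch_def]
  rw [List.getD_eq_getElem _ _ h]
  exact heq

theorem MidGood.h'Idx_eq {z : List Bool} {q p : ℕ} (hg : MidGood z q p) : h'Idx z = p := by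
  have htp := hg.tcnt_p
  obtain ⟨hqp, hpn, hzq, hzp, hHq, hHp, hnt, hcount, hend⟩ := hg
  have hpred : (fun i => isU z i && (decide (pathHeight z i = 1) || decide (pathHeight z i = 1-1))) p = true :=
    (utouch_pred_iff z p).mpr ⟨hzp, hHp⟩
  have hcnt' : ((List.range p).filter
      (fun i => isU z i && (decide (pathHeight z i = 1) || decide (pathHeight z i = 1-1)))).length
      = hcnt z true 1 0 z.length := by
    rw [utouch_count]
    omega
  obtain ⟨h, heq⟩ := index_of_count z.length _ p (hcnt z true 1 0 z.length) hpred hpn hcnt'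
  unfold h'Idx
  rw [ustart_eq, utouch_def]
  rw [List.getD_eq_getElem _ _ h]
  exact heq

theorem MidGood.gIdx_eq {z : List Bool} {q p : ℕ} (hg : MidGood z q p) :
    gIdx (z.set p false) = p := by
  have hx := x_char hg
  obtain ⟨hqp, hpn, hzq, hzp, hHq, hHp, hnt, hcount, hend⟩ := hg
  have hxp : (z.set p false).getD p true = false := getD_set_self z p false true hpn
  have hxh : pathHeight (z.set p false) p = pathHeight z p :=
    pathHeight_set_le z p false p (le_refl p)
  have hpred : (fun i => isD (z.set p false) i && (decide (pathHeight (z.set p false) i = 0)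
      || decide (pathHeight (z.set p false) i = 0+1))) p = true :=
    (dtouch_pred_iff (z.set p false) p).mpr ⟨hxp, by rw [hxh]; exact hHp⟩
  have hds : dstart (z.set p false) 0 = hcnt (z.set p false) false 0 0 z.length := by
    rw [dstart_eq, List.length_set]
  have hcnt' : ((List.range p).filter
      (fun i => isD (z.set p false) i && (decide (pathHeight (z.set p false) i = 0)
        || decide (pathHeight (z.set p false) i = 0+1)))).length
      = dstart (z.set p false) 0 := by
    rw [dtouch_count, hds, hx]
  obtain ⟨h, heq⟩ := index_of_count (z.set p false).length _ p (dstart (z.set p false) 0) hpred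
    (by rw [List.length_set]; exact hpn) hcnt'
  unfold gIdx
  rw [dtouch_def]
  rw [List.getD_eq_getElem _ _ h]
  exact heq

theorem MidGood.g'Idx_eq {z : List Bool} {q p : ℕ} (hg : MidGood z q p) :
    g'Idx (z.set q false) = q := by
  have hy := y_char hg
  obtain ⟨hqp, hpn, hzq, hzp, hHq, hHp, hnt, hcount, hend⟩ := hg
  have hqn : q < z.length := by omega
  have hyq : (z.set q false).getD q true = false := getD_set_self z q false true hqn
  have hyh : pathHeight (z.set q false) q = pathHeight z q :=
    pathHeight_set_le z q false q (le_refl q)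
  have hpred : (fun i => isD (z.set q false) i && (decide (pathHeight (z.set q false) i = 0)
      || decide (pathHeight (z.set q false) i = 0+1))) q = true :=
    (dtouch_pred_iff (z.set q false) q).mpr ⟨hyq, by rw [hyh]; exact hHq⟩
  have hds : dstart (z.set q false) 0 = hcnt (z.set q false) false 0 0 z.length := by
    rw [dstart_eq, List.length_set]
  have hcnt' : ((List.range q).filter
      (fun i => isD (z.set q false) i && (decide (pathHeight (z.set q false) i = 0)
        || decide (pathHeight (z.set q false) i = 0+1)))).length
      = dstart (z.set q false) 0 - 1 := by
    rw [dtouch_count, hds, ← hy]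
    omega
  obtain ⟨h, heq⟩ := index_of_count (z.set q false).length _ q (dstart (z.set q false) 0 - 1) hpred
    (by rw [List.length_set]; exact hqn) hcnt'
  unfold g'Idx
  rw [dtouch_def]
  rw [List.getD_eq_getElem _ _ h]
  exact heq

theorem pred_elem (n : ℕ) (pbool : ℕ → Bool) (m : ℕ)
    (h : m < ((List.range n).filter pbool).length) :
    ∃ q, ((List.range n).filter pbool)[m]'h = q ∧ q < n ∧ pbool q = true ∧
      ((List.range q).filter pbool).length = m := by
  refine ⟨_, rfl, ?_, ?_, count_below_range n pbool m h⟩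
  · exact ((mem_filter_range n pbool _).mp (List.getElem_mem h)).1
  · exact ((mem_filter_range n pbool _).mp (List.getElem_mem h)).2

-- ===== forward construction =====
theorem forward_good (x : List Bool) (hend : pathHeight x x.length = 0)
    (hflaw : lcnt x 0 0 x.length < bcnt x false 0 x.length) :
    ∃ q : ℕ, gIdx x < x.length ∧ x.getD (gIdx x) true = false ∧
      MidGood (x.set (gIdx x) true) q (gIdx x) := by
  have hd1 : 1 ≤ hcnt x false 1 0 x.length := exists_dstart_one x hend hflaw
  have hlen : (dtouch x 0).length = tcnt x false 0 x.length := dtouch_len x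
  have htc := tcnt_eq x false 0 x.length
  have hds : dstart x 0 = hcnt x false 0 0 x.length := dstart_eq x 0
  have hidx : dstart x 0 < ((List.range x.length).filter
      (fun i => isD x i && (decide (pathHeight x i = 0) || decide (pathHeight x i = 0+1)))).length := by
    rw [← dtouch_def]
    omega
  have hgidx : gIdx x = ((List.range x.length).filter
      (fun i => isD x i && (decide (pathHeight x i = 0) || decide (pathHeight x i = 0+1))))[dstart x 0]'hidx := by
    unfold gIdx
    rw [dtouch_def, List.getD_eq_getElem _ _ hidx]
  set p := ((List.range x.length).filter
      (fun i => isD x i && (decide (pathHeight x i = 0) || decide (pathHeight x i = 0+1))))[dstart x 0]'hidx with hp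
  rw [hgidx]
  have hmem := (mem_filter_range x.length _ p).mp (List.getElem_mem hidx)
  have hpn : p < x.length := hmem.1
  obtain ⟨hxp, hHp⟩ := (dtouch_pred_iff x p).mp hmem.2
  have hstar : tcnt x false 0 p = hcnt x false 0 0 x.length := by
    rw [← dtouch_count, count_below_range x.length _ (dstart x 0) hidx, hds]
  clear_value p
  clear hp hgidx hidx hmem
  -- crossing computations in x
  have htp := tcnt_eq x false 0 p
  have c0p := crossing x 0 p (by omega)
  have cm1p := crossing x (-1) p (by omega)
  have cm1n := crossing x (-1) x.length (le_refl _)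
  rw [hend] at cm1n
  norm_num at c0p cm1p cm1n
  have sum1 : hcnt x true (-1) 0 x.length
      = hcnt x true (-1) 0 p + hcnt x true (-1) p (p+1) + hcnt x true (-1) (p+1) x.length := by
    rw [← hcnt_split x true (-1) (Nat.zero_le p) (show p ≤ p+1 by omega),
        ← hcnt_split x true (-1) (Nat.zero_le (p+1)) (show p+1 ≤ x.length by omega)]
  have m1 : hcnt x true (-1) p (p+1) = 0 := by
    rw [hcnt_single, if_neg]
    rintro ⟨h, _⟩
    rw [hxp] at h
    exact Bool.noConfusion h
  have sd0 : hcnt x false 0 0 x.length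
      = hcnt x false 0 0 p + hcnt x false 0 p (p+1) + hcnt x false 0 (p+1) x.length := by
    rw [← hcnt_split x false 0 (Nat.zero_le p) (show p ≤ p+1 by omega),
        ← hcnt_split x false 0 (Nat.zero_le (p+1)) (show p+1 ≤ x.length by omega)]
  have m2 : hcnt x false 0 p (p+1) = if pathHeight x p = 0 then 1 else 0 := by
    rw [hcnt_single, hxp]
    simp
  -- the modified path z
  have hzlen : (x.set p true).length = x.length := List.length_set
  have hendz : pathHeight (x.set p true) (x.set p true).length = 2 := by
    rw [hzlen, height_set_true x p hpn hxp x.length (by omega), hend]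
    norm_num
  have hzp : (x.set p true).getD p true = true := getD_set_self x p true true hpn
  have hHzp : pathHeight (x.set p true) p = pathHeight x p :=
    pathHeight_set_le x p true p (le_refl p)
  have U1a : hcnt (x.set p true) true 1 0 x.length
      = hcnt (x.set p true) true 1 0 p + hcnt (x.set p true) true 1 p (p+1)
        + hcnt (x.set p true) true 1 (p+1) x.length := by
    rw [← hcnt_split (x.set p true) true 1 (Nat.zero_le p) (show p ≤ p+1 by omega),
        ← hcnt_split (x.set p true) true 1 (Nat.zero_le (p+1)) (show p+1 ≤ x.length by omega)]
  have U1b : hcnt (x.set p true) true 1 0 p = hcnt x true 1 0 p :=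
    hcnt_set_le x p true true 1 0 p (le_refl p)
  have U1c : hcnt (x.set p true) true 1 p (p+1) = if pathHeight x p = 1 then 1 else 0 := by
    rw [hcnt_single, hzp, hHzp]
    simp
  have U1d : hcnt (x.set p true) true 1 (p+1) x.length = hcnt x true (-1) (p+1) x.length := by
    rw [hcnt_set_gt_true x p hpn hxp true 1 (p+1) x.length (by omega)]
    norm_num
  have U1e : hcnt (x.set p true) true 1 0 (x.set p true).length
      = hcnt (x.set p true) true 1 0 x.length := by rw [hzlen]
  have TZ : tcnt (x.set p true) true 0 p = hcnt x true 0 0 p + hcnt x true 1 0 p := by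
    rw [tcnt_set_le x p true true 0 p (le_refl p), tcnt_eq]
  have TX : tcnt x true 0 p = hcnt x true 0 0 p + hcnt x true 1 0 p := tcnt_eq x true 0 p
  have KEY1 : hcnt (x.set p true) true 1 0 (x.set p true).length
      = tcnt (x.set p true) true 0 p := by
    rcases hHp with h2 | h2 <;> simp only [h2] at * <;> split_ifs at * <;> omega
  have KEY2 : 1 ≤ hcnt (x.set p true) true 1 0 (x.set p true).length := by
    rcases hHp with h2 | h2 <;> simp only [h2] at * <;> split_ifs at * <;> omega
  -- locate p inside utouch of the modified path
  have hpredp : (fun i => isU (x.set p true) i && (decide (pathHeight (x.set p true) i = 1)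
      || decide (pathHeight (x.set p true) i = 1-1))) p = true :=
    (utouch_pred_iff (x.set p true) p).mpr ⟨hzp, by rw [hHzp]; exact hHp⟩
  obtain ⟨hplt, hpeq⟩ := index_of_count (x.set p true).length _ p
    (hcnt (x.set p true) true 1 0 (x.set p true).length) hpredp (by omega)
    (by rw [utouch_count]; exact KEY1.symm)
  have hmlt : hcnt (x.set p true) true 1 0 (x.set p true).length - 1
      < ((List.range ((x.set p true).length)).filter
        (fun i => isU (x.set p true) i && (decide (pathHeight (x.set p true) i = 1)
          || decide (pathHeight (x.set p true) i = 1-1)))).length := by omega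
  obtain ⟨q, hqeq, hqn, hqpred, hqcount⟩ := pred_elem (x.set p true).length _
    (hcnt (x.set p true) true 1 0 (x.set p true).length - 1) hmlt
  obtain ⟨hzq, hHzq⟩ := (utouch_pred_iff (x.set p true) q).mp hqpred
  have hqp : q < p := by
    have hmono := strictMono_getElem _
      (sorted_filter_range (x.set p true).length
        (fun i => isU (x.set p true) i && (decide (pathHeight (x.set p true) i = 1)
          || decide (pathHeight (x.set p true) i = 1-1))))
      (hcnt (x.set p true) true 1 0 (x.set p true).length - 1)
      (hcnt (x.set p true) true 1 0 (x.set p true).length) hmlt hplt (by omega)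
    rw [hqeq, hpeq] at hmono
    exact hmono
  have hcountq' : tcnt (x.set p true) true 0 q + 1
      = hcnt (x.set p true) true 1 0 (x.set p true).length := by
    rw [← utouch_count, hqcount]
    omega
  have hnt : ∀ i, q < i → i < p → (x.set p true).getD i true = true →
      ¬(pathHeight (x.set p true) i = 0 ∨ pathHeight (x.set p true) i = 1) := by
    intro i hi1 hi2 hgi hHi
    have hsucc : ((List.range ((x.set p true).length)).filter
        (fun i => isU (x.set p true) i && (decide (pathHeight (x.set p true) i = 1)
          || decide (pathHeight (x.set p true) i = 1-1))))[
          (hcnt (x.set p true) true 1 0 (x.set p true).length - 1) + 1]'(by omega) = p := by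
      simp only [show (hcnt (x.set p true) true 1 0 (x.set p true).length - 1) + 1
          = hcnt (x.set p true) true 1 0 (x.set p true).length from by omega]
      exact hpeq
    have hconsec := filter_range_consec (x.set p true).length
      (fun i => isU (x.set p true) i && (decide (pathHeight (x.set p true) i = 1)
        || decide (pathHeight (x.set p true) i = 1-1)))
      (hcnt (x.set p true) true 1 0 (x.set p true).length - 1) (by omega) i
      (by rw [hqeq]; exact hi1)
      (by rw [hsucc]; exact hi2)
      (by omega)
    exact hconsec ((utouch_pred_iff (x.set p true) i).mpr ⟨hgi, hHi⟩)
  refine ⟨q, by omega, hxp, hqp, by omega, hzq, hzp, hHzq, ?_, hnt, hcountq', hendz⟩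
  rw [hHzp]
  exact hHp

-- ===== backward construction =====
theorem backward_good (y : List Bool) (hend : pathHeight y y.length = 0)
    (hpos : 1 ≤ lcnt y 0 0 y.length) :
    ∃ p : ℕ, g'Idx y < y.length ∧ y.getD (g'Idx y) true = false ∧
      MidGood (y.set (g'Idx y) true) (g'Idx y) p := by
  have hd0 : 1 ≤ hcnt y false 0 0 y.length := exists_dstart_zero y hpos
  have hlen : (dtouch y 0).length = tcnt y false 0 y.length := dtouch_len y
  have htc := tcnt_eq y false 0 y.length
  have hds : dstart y 0 = hcnt y false 0 0 y.length := dstart_eq y 0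
  have hidx : dstart y 0 - 1 < ((List.range y.length).filter
      (fun i => isD y i && (decide (pathHeight y i = 0) || decide (pathHeight y i = 0+1)))).length := by
    rw [← dtouch_def]
    omega
  have hgidx : g'Idx y = ((List.range y.length).filter
      (fun i => isD y i && (decide (pathHeight y i = 0) || decide (pathHeight y i = 0+1))))[dstart y 0 - 1]'hidx := by
    unfold g'Idx
    rw [dtouch_def, List.getD_eq_getElem _ _ hidx]
  set q := ((List.range y.length).filter
      (fun i => isD y i && (decide (pathHeight y i = 0) || decide (pathHeight y i = 0+1))))[dstart y 0 - 1]'hidx with hq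
  rw [hgidx]
  have hmem := (mem_filter_range y.length _ q).mp (List.getElem_mem hidx)
  have hqn : q < y.length := hmem.1
  obtain ⟨hyq, hHq⟩ := (dtouch_pred_iff y q).mp hmem.2
  have hstar : tcnt y false 0 q + 1 = hcnt y false 0 0 y.length := by
    rw [← dtouch_count, count_below_range y.length _ (dstart y 0 - 1) hidx, hds]
    omega
  clear_value q
  clear hq hgidx hidx hmem
  -- crossing computations in y
  have tq := tcnt_eq y false 0 q
  have c0q := crossing y 0 q (by omega)
  have cm1q := crossing y (-1) q (by omega)
  have cm1n := crossing y (-1) y.length (le_refl _)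
  rw [hend] at cm1n
  norm_num at c0q cm1q cm1n
  have sum1 : hcnt y true (-1) 0 y.length
      = hcnt y true (-1) 0 q + hcnt y true (-1) q (q+1) + hcnt y true (-1) (q+1) y.length := by
    rw [← hcnt_split y true (-1) (Nat.zero_le q) (show q ≤ q+1 by omega),
        ← hcnt_split y true (-1) (Nat.zero_le (q+1)) (show q+1 ≤ y.length by omega)]
  have m1 : hcnt y true (-1) q (q+1) = 0 := by
    rw [hcnt_single, if_neg]
    rintro ⟨h, _⟩
    rw [hyq] at h
    exact Bool.noConfusion h
  -- the modified path z := y.set q true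
  have hzlen : (y.set q true).length = y.length := List.length_set
  have hendz : pathHeight (y.set q true) (y.set q true).length = 2 := by
    rw [hzlen, height_set_true y q hqn hyq y.length (by omega), hend]
    norm_num
  have hzq : (y.set q true).getD q true = true := getD_set_self y q true true hqn
  have hHzq : pathHeight (y.set q true) q = pathHeight y q :=
    pathHeight_set_le y q true q (le_refl q)
  have U1a : hcnt (y.set q true) true 1 0 y.length
      = hcnt (y.set q true) true 1 0 q + hcnt (y.set q true) true 1 q (q+1)
        + hcnt (y.set q true) true 1 (q+1) y.length := by
    rw [← hcnt_split (y.set q true) true 1 (Nat.zero_le q) (show q ≤ q+1 by omega),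
        ← hcnt_split (y.set q true) true 1 (Nat.zero_le (q+1)) (show q+1 ≤ y.length by omega)]
  have U1b : hcnt (y.set q true) true 1 0 q = hcnt y true 1 0 q :=
    hcnt_set_le y q true true 1 0 q (le_refl q)
  have U1c : hcnt (y.set q true) true 1 q (q+1) = if pathHeight y q = 1 then 1 else 0 := by
    rw [hcnt_single, hzq, hHzq]
    simp
  have U1d : hcnt (y.set q true) true 1 (q+1) y.length = hcnt y true (-1) (q+1) y.length := by
    rw [hcnt_set_gt_true y q hqn hyq true 1 (q+1) y.length (by omega)]
    norm_num
  have U1e : hcnt (y.set q true) true 1 0 (y.set q true).length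
      = hcnt (y.set q true) true 1 0 y.length := by rw [hzlen]
  have TZ : tcnt (y.set q true) true 0 q = hcnt y true 0 0 q + hcnt y true 1 0 q := by
    rw [tcnt_set_le y q true true 0 q (le_refl q), tcnt_eq]
  have KEY1 : tcnt (y.set q true) true 0 q + 1
      = hcnt (y.set q true) true 1 0 (y.set q true).length := by
    rcases hHq with h2 | h2 <;> simp only [h2] at * <;> split_ifs at * <;> omega
  have POS : 1 ≤ hcnt y true (-1) (q+1) y.length := by
    rcases hHq with h2 | h2 <;> simp only [h2] at * <;> split_ifs at * <;> omega
  -- length of utouch of z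
  have TS : tcnt (y.set q true) true 0 y.length
      = tcnt (y.set q true) true 0 q + tcnt (y.set q true) true q (q+1)
        + tcnt (y.set q true) true (q+1) y.length := by
    rw [← tcnt_split (y.set q true) true (Nat.zero_le q) (show q ≤ q+1 by omega),
        ← tcnt_split (y.set q true) true (Nat.zero_le (q+1)) (show q+1 ≤ y.length by omega)]
  have mS : tcnt (y.set q true) true q (q+1) = 1 := by
    rw [tcnt_single, if_pos ⟨hzq, by rw [hHzq]; exact hHq⟩]
  have tS : tcnt (y.set q true) true (q+1) y.length
      = hcnt (y.set q true) true 0 (q+1) y.length + hcnt (y.set q true) true 1 (q+1) y.length :=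
    tcnt_eq _ _ _ _
  -- locate q inside utouch of z
  have hpredq : (fun i => isU (y.set q true) i && (decide (pathHeight (y.set q true) i = 1)
      || decide (pathHeight (y.set q true) i = 1-1))) q = true :=
    (utouch_pred_iff (y.set q true) q).mpr ⟨hzq, by rw [hHzq]; exact hHq⟩
  obtain ⟨hqlt, hqeq⟩ := index_of_count (y.set q true).length _ q
    (tcnt (y.set q true) true 0 q) hpredq (by omega)
    (by rw [utouch_count])
  have hlenL : ((List.range ((y.set q true).length)).filter
      (fun i => isU (y.set q true) i && (decide (pathHeight (y.set q true) i = 1)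
        || decide (pathHeight (y.set q true) i = 1-1)))).length
      = tcnt (y.set q true) true 0 (y.set q true).length := by
    rw [utouch_count]
  have hplt2 : tcnt (y.set q true) true 0 q + 1
      < ((List.range ((y.set q true).length)).filter
      (fun i => isU (y.set q true) i && (decide (pathHeight (y.set q true) i = 1)
        || decide (pathHeight (y.set q true) i = 1-1)))).length := by
    rw [hlenL, hzlen]
    omega
  obtain ⟨p, hpeq, hpn, hppred, hpcount⟩ := pred_elem (y.set q true).length _
    (tcnt (y.set q true) true 0 q + 1) hplt2
  obtain ⟨hzp, hHzp⟩ := (utouch_pred_iff (y.set q true) p).mp hppred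
  have hqp : q < p := by
    have hmono := strictMono_getElem _
      (sorted_filter_range (y.set q true).length
        (fun i => isU (y.set q true) i && (decide (pathHeight (y.set q true) i = 1)
          || decide (pathHeight (y.set q true) i = 1-1))))
      (tcnt (y.set q true) true 0 q) (tcnt (y.set q true) true 0 q + 1) hqlt hplt2 (by omega)
    rw [hqeq, hpeq] at hmono
    exact hmono
  have hnt : ∀ i, q < i → i < p → (y.set q true).getD i true = true →
      ¬(pathHeight (y.set q true) i = 0 ∨ pathHeight (y.set q true) i = 1) := by
    intro i hi1 hi2 hgi hHi
    have hconsec := filter_range_consec (y.set q true).length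
      (fun i => isU (y.set q true) i && (decide (pathHeight (y.set q true) i = 1)
        || decide (pathHeight (y.set q true) i = 1-1)))
      (tcnt (y.set q true) true 0 q) (by omega) i
      (by rw [hqeq]; exact hi1)
      (by rw [hpeq]; exact hi2)
      (by rw [hzlen] at hpn ⊢; omega)
    exact hconsec ((utouch_pred_iff (y.set q true) i).mpr ⟨hgi, hHi⟩)
  exact ⟨p, by omega, hyq, hqp, hpn, hzq, hzp, by rw [hHzq]; exact hHq, hHzp, hnt, KEY1, hendz⟩

theorem min_change_bijection (k e : ℕ) (hk : 1 ≤ k) (he : e < k) :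
    Set.BijOn fMap (DyckSet k e) (DyckSet k (e+1)) ∧
    ∀ x ∈ DyckSet k e, ∃ a b : ℕ, a ≠ b ∧
      x.getD a true = true ∧ (fMap x).getD a true = false ∧
      x.getD b true = false ∧ (fMap x).getD b true = true ∧
      ∀ i, i ≠ a → i ≠ b → x.getD i true = (fMap x).getD i true := by
  have main : ∀ x ∈ DyckSet k e, (fMap x ∈ DyckSet k (e+1)) ∧ (h'Map (g'Map (fMap x)) = x) ∧
      (∃ a b : ℕ, a ≠ b ∧ x.getD a true = true ∧ (fMap x).getD a true = false ∧
        x.getD b true = false ∧ (fMap x).getD b true = true ∧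
        ∀ i, i ≠ a → i ≠ b → x.getD i true = (fMap x).getD i true) := by
    intro x hx
    obtain ⟨hL, hC, hF⟩ := hx
    have hcf : x.count false = k := by have h := count_add_count x; omega
    have hend : pathHeight x x.length = 0 := by rw [pathHeight_length, hC, hcf]; omega
    have hflawlt : lcnt x 0 0 x.length < bcnt x false 0 x.length := by
      rw [← flaws_eq, ← count_false_eq_bcnt, hF, hcf]; exact he
    obtain ⟨q, hpn, hxp, hg⟩ := forward_good x hend hflawlt
    have hgc := hg
    obtain ⟨hqp, hpzlen, hzq, hzp, hHzq, hHzp, hnt, hcount, hendz⟩ := hgc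
    have hzlen : (x.set (gIdx x) true).length = x.length := List.length_set
    have hfx : fMap x = (x.set (gIdx x) true).set q false := by
      show (gMap x).set (hIdx (gMap x)) false = _
      rw [show gMap x = x.set (gIdx x) true from rfl, hg.hIdx_eq]
    have hxpf : (x.set (gIdx x) true).set (gIdx x) false = x := by
      rw [List.set_set]; exact set_getD_self x (gIdx x) false hxp
    have hflaw2 : flaws (fMap x) = e + 1 := by
      rw [hfx, flaws_eq, List.length_set, flaw_step hg, hxpf, hzlen, ← flaws_eq, hF]
    have hcount1 : (x.set (gIdx x) true).count true = k + 1 := by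
      rw [count_set_true x _ hpn hxp, hC]
    have hcount2 : (fMap x).count true = k := by
      rw [hfx]
      have h2 := count_set_false (x.set (gIdx x) true) q (by omega) hzq
      omega
    have hflen : (fMap x).length = 2*k := by
      rw [hfx, List.length_set, List.length_set]; exact hL
    refine ⟨⟨hflen, hcount2, hflaw2⟩, ?_, ?_⟩
    · rw [hfx]
      have h1 : g'Map ((x.set (gIdx x) true).set q false) = x.set (gIdx x) true := by
        show ((x.set (gIdx x) true).set q false).set (g'Idx ((x.set (gIdx x) true).set q false)) true = _
        rw [hg.g'Idx_eq, List.set_set]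
        exact set_getD_self _ q true hzq
      rw [h1]
      show (x.set (gIdx x) true).set (h'Idx (x.set (gIdx x) true)) false = x
      rw [hg.h'Idx_eq]
      exact hxpf
    · refine ⟨q, gIdx x, by omega, ?_, ?_, hxp, ?_, ?_⟩
      · have h3 : (x.set (gIdx x) true).getD q true = x.getD q true :=
          getD_set_ne x (gIdx x) q true true (by omega)
        rw [← h3]; exact hzq
      · rw [hfx]; exact getD_set_self _ q false true (by omega)
      · rw [hfx, getD_set_ne _ q (gIdx x) false true (by omega)]; exact hzp
      · intro i hiq hip
        rw [hfx, getD_set_ne _ q i false true (Ne.symm hiq),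
          getD_set_ne x (gIdx x) i true true (Ne.symm hip)]
  have surj : ∀ y ∈ DyckSet k (e+1), ∃ x ∈ DyckSet k e, fMap x = y := by
    intro y hy
    obtain ⟨hL, hC, hF⟩ := hy
    have hcf : y.count false = k := by have h := count_add_count y; omega
    have hend : pathHeight y y.length = 0 := by rw [pathHeight_length, hC, hcf]; omega
    have hpos : 1 ≤ lcnt y 0 0 y.length := by rw [← flaws_eq, hF]; omega
    obtain ⟨p, hqn, hyq, hg⟩ := backward_good y hend hpos
    have hgc := hg
    obtain ⟨hqp, hpzlen, hzq, hzp, hHzq, hHzp, hnt, hcount, hendz⟩ := hgc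
    have hzlen : (y.set (g'Idx y) true).length = y.length := List.length_set
    have hyrec : (y.set (g'Idx y) true).set (g'Idx y) false = y := by
      rw [List.set_set]; exact set_getD_self y (g'Idx y) false hyq
    have hcz : (y.set (g'Idx y) true).count true = k + 1 := by
      rw [count_set_true y _ hqn hyq, hC]
    refine ⟨(y.set (g'Idx y) true).set p false, ⟨?_, ?_, ?_⟩, ?_⟩
    · rw [List.length_set, List.length_set]; exact hL
    · have h2 := count_set_false (y.set (g'Idx y) true) p hpzlen hzp
      omega
    · have h3 := flaw_step hg
      rw [hyrec, hzlen] at h3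
      rw [← flaws_eq, hF] at h3
      rw [flaws_eq, List.length_set, List.length_set]
      omega
    · have h1 : gMap ((y.set (g'Idx y) true).set p false) = y.set (g'Idx y) true := by
        show ((y.set (g'Idx y) true).set p false).set (gIdx ((y.set (g'Idx y) true).set p false)) true = _
        rw [hg.gIdx_eq, List.set_set]
        exact set_getD_self _ p true hzp
      show hMap (gMap ((y.set (g'Idx y) true).set p false)) = y
      rw [h1]
      show (y.set (g'Idx y) true).set (hIdx (y.set (g'Idx y) true)) false = y
      rw [hg.hIdx_eq]
      exact hyrec
  refine ⟨⟨fun x hx => (main x hx).1, ?_, ?_⟩, fun x hx => (main x hx).2.2⟩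
  · intro x1 h1 x2 h2 heq
    rw [← (main x1 h1).2.1, ← (main x2 h2).2.1, heq]
  · intro y hy
    obtain ⟨x, hx, hfx⟩ := surj y hy
    exact ⟨x, hx, hfx⟩
end

section
/- For any k ≥ 1 and any odd ℓ ≥ 3, if the odd graph O_{2k+1} has a C_ℓ-factor, then the middle levels graph M_{2k+1} has a C_{2ℓ}-factor. -/
/-- The odd graph `O_{2k+1}`: vertices are the k-element subsets of `{1,...,2k+1}`,
two sets adjacent iff they are disjoint. -/
def oddGraph (k : ℕ) : SimpleGraph {s : Finset (Fin (2*k+1)) // s.card = k} :=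
  SimpleGraph.fromRel (fun s t => Disjoint s.1 t.1)

/-- The middle levels graph `M_{2k+1}`: vertices are the k-element and (k+1)-element
subsets of `{1,...,2k+1}`, two sets adjacent iff one is a subset of the other. -/
def middleGraph (k : ℕ) : SimpleGraph {s : Finset (Fin (2*k+1)) // s.card = k ∨ s.card = k+1} :=
  SimpleGraph.fromRel (fun s t => s.1 ⊂ t.1)

/-- `G` has a `C_ℓ`-factor consisting of `m` cycles: a family of `m` vertex-disjoint
cycles, each of length `ℓ`, covering every vertex exactly once. -/
def HasCycleFactor {V : Type*} (G : SimpleGraph V) (ℓ m : ℕ) : Prop :=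
  ∃ (v : Fin m → V) (c : ∀ i, G.Walk (v i) (v i)),
    (∀ i, (c i).IsCycle) ∧ (∀ i, (c i).length = ℓ) ∧
    ∀ x : V, ∃! i, x ∈ (c i).support

set_option linter.unnecessarySeqFocus false

namespace TCF
open SimpleGraph

variable {k : ℕ}

abbrev VO (k : ℕ) := {s : Finset (Fin (2*k+1)) // s.card = k}
abbrev VM (k : ℕ) := {s : Finset (Fin (2*k+1)) // s.card = k ∨ s.card = k+1}

def lab (b : Bool) (x : VO k) : VM k :=
  if b then ⟨x.1, Or.inl x.2⟩
  else ⟨x.1ᶜ, Or.inr (by rw [Finset.card_compl, x.2]; simp [Fintype.card_fin]; omega)⟩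

lemma lab_card (b : Bool) (x : VO k) : (lab b x).1.card = if b then k else k + 1 := by
  cases b
  · simp [lab, Finset.card_compl, x.2]; omega
  · simp [lab, x.2]

lemma lab_inj {b b' : Bool} {x y : VO k} (h : lab b x = lab b' y) : b = b' ∧ x = y := by
  have hc : (lab b x).1.card = (lab b' y).1.card := congrArg (fun z : VM k => z.1.card) h
  rw [lab_card, lab_card] at hc
  have hbb : b = b' := by cases b <;> cases b' <;> simp_all
  subst hbb
  refine ⟨rfl, ?_⟩
  have hv : (lab b x).1 = (lab b y).1 := congrArg (fun z : VM k => z.1) h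
  cases b <;> simp [lab] at hv <;> exact Subtype.ext hv

lemma adjO {a b : VO k} (h : (oddGraph k).Adj a b) : Disjoint a.1 b.1 := by
  rw [oddGraph, fromRel_adj] at h
  rcases h.2 with h2 | h2
  · exact h2
  · exact h2.symm

lemma adjM_of_disjoint {a b : VO k} (hd : Disjoint a.1 b.1) :
    (middleGraph k).Adj (lab true a) (lab false b) := by
  rw [middleGraph, fromRel_adj]
  constructor
  · intro he
    have hc : (lab true a).1.card = (lab false b).1.card :=
      congrArg (fun z : VM k => z.1.card) he
    rw [lab_card, lab_card] at hc
    simp at hc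
  · left
    show (lab true a).1 ⊂ (lab false b).1
    have hsub : (lab true a).1 ⊆ (lab false b).1 := by
      simp only [lab, if_pos]
      exact le_compl_iff_disjoint_right.2 hd
    refine Finset.ssubset_iff_subset_ne.2 ⟨hsub, fun he => ?_⟩
    have := he ▸ lab_card true a
    rw [lab_card false b] at this
    simp at this

lemma adjM_IK {a b : VO k} (h : (oddGraph k).Adj a b) :
    (middleGraph k).Adj (lab true a) (lab false b) := adjM_of_disjoint (adjO h)

lemma adjM_KI {a b : VO k} (h : (oddGraph k).Adj a b) :
    (middleGraph k).Adj (lab false a) (lab true b) :=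
  (adjM_of_disjoint (adjO h.symm)).symm

def lift : ∀ {a b : VO k}, (p : (oddGraph k).Walk a b) → p.length % 2 = 0 →
    (middleGraph k).Walk (lab true a) (lab true b)
  | _, _, .nil, _ => .nil
  | _, _, .cons _ .nil, he => absurd he (by simp)
  | _, _, .cons h (.cons h' q), he =>
      .cons (adjM_IK h) (.cons (adjM_KI h') (lift q (by
        simp only [SimpleGraph.Walk.length_cons] at he; omega)))

theorem lift_length : ∀ {a b : VO k} (p : (oddGraph k).Walk a b) (he : p.length % 2 = 0),
    (lift p he).length = p.length
  | _, _, .nil, _ => rfl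
  | _, _, .cons _ .nil, he => absurd he (by simp)
  | _, _, .cons h (.cons h' q), he => by
      simp [lift, SimpleGraph.Walk.length_cons, lift_length q]

def altList : Bool → List (VO k) → List (VM k)
  | _, [] => []
  | s, a :: r => lab s a :: altList (!s) r

theorem lift_support : ∀ {a b : VO k} (p : (oddGraph k).Walk a b) (he : p.length % 2 = 0),
    (lift p he).support = altList true p.support
  | _, _, .nil, _ => rfl
  | _, _, .cons _ .nil, he => absurd he (by simp)
  | _, _, .cons h (.cons h' q), he => by
      simp [lift, SimpleGraph.Walk.support_cons, altList, lift_support q]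

theorem altList_length (s : Bool) (t : List (VO k)) : (altList s t).length = t.length := by
  induction t generalizing s with
  | nil => rfl
  | cons a r ih => simp [altList, ih]

theorem altList_getElem (s : Bool) (t : List (VO k)) (j : ℕ) (h : j < t.length) :
    (altList s t)[j]'(by rw [altList_length]; exact h)
      = lab (s ^^ decide (j % 2 = 1)) (t[j]'h) := by
  induction t generalizing s j with
  | nil => simp at h
  | cons a r ih =>
    cases j with
    | zero => simp [altList]
    | succ j =>
      simp only [altList, List.getElem_cons_succ]
      rw [ih _ _ (by simpa using h)]
      congr 1
      rcases Nat.mod_two_eq_zero_or_one j with hj | hj <;>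
        · have h2 : (j+1) % 2 = 1 - j % 2 := by omega
          simp [hj, h2]
theorem mem_altList {x : VM k} : ∀ {s : Bool} {tt : List (VO k)}, x ∈ altList s tt →
    ∃ y ∈ tt, ∃ b, x = lab b y := by
  intro s tt
  induction tt generalizing s with
  | nil => simp [altList]
  | cons a r ih =>
    intro hx
    rcases List.mem_cons.mp hx with h | h
    · exact ⟨a, List.mem_cons_self, s, h⟩
    · obtain ⟨y, hy, b, hb⟩ := ih h
      exact ⟨y, List.mem_cons_of_mem _ hy, b, hb⟩

theorem gcongr_idx {α : Type*} (l : List α) {i j : ℕ} (h : i = j) (hi : i < l.length) :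
    l[i]'hi = l[j]'(h ▸ hi) := by subst h; rfl

theorem support_zero {V : Type*} {G : SimpleGraph V} {a b : V} (p : G.Walk a b)
    (h : 0 < p.support.length) : p.support[0]'h = a :=
  (List.getElem_of_eq p.support_eq_cons h).trans rfl

theorem support_getElem_length {V : Type*} {G : SimpleGraph V} {a b : V} (p : G.Walk a b) :
    p.support[p.length]'(by rw [SimpleGraph.Walk.length_support]; omega) = b := by
  induction p with
  | nil => rfl
  | cons h q ih =>
    simp only [SimpleGraph.Walk.support_cons, SimpleGraph.Walk.length_cons,
      List.getElem_cons_succ]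
    exact ih

theorem edges_getElem {V : Type*} {G : SimpleGraph V} :
    ∀ {a b : V} (p : G.Walk a b) (j : ℕ) (h : j < p.length),
    p.edges[j]'(by rw [SimpleGraph.Walk.length_edges]; exact h)
      = s(p.support[j]'(by rw [SimpleGraph.Walk.length_support]; omega),
          p.support[j+1]'(by rw [SimpleGraph.Walk.length_support]; omega))
  | _, _, .nil, j, h => by simp at h
  | _, _, .cons hadj q, 0, h => by
      simp only [SimpleGraph.Walk.edges_cons, SimpleGraph.Walk.support_cons,
        List.getElem_cons_zero, List.getElem_cons_succ]
      rw [support_zero q]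
  | _, _, .cons hadj q, j+1, h => by
      simp only [SimpleGraph.Walk.edges_cons, SimpleGraph.Walk.support_cons,
        List.getElem_cons_succ]
      exact edges_getElem q j (by simpa using h)

set_option maxHeartbeats 1600000 in
theorem cycle_lift {l : ℕ} (hodd : Odd l) (hl : 3 ≤ l) {vi : VO k}
    (p : (oddGraph k).Walk vi vi) (hc : p.IsCycle) (hlen : p.length = l) :
    ∃ W : (middleGraph k).Walk (lab true vi) (lab true vi),
      W.IsCycle ∧ W.length = 2 * l ∧
      ∀ x : VM k, x ∈ W.support ↔ ∃ y ∈ p.support, ∃ b, x = lab b y := by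
  obtain ⟨r, hr⟩ := hodd
  have hr1 : 1 ≤ r := by omega
  have he : (p.append p).length % 2 = 0 := by
    rw [SimpleGraph.Walk.length_append, hlen]; omega
  set t := p.support.tail with htdef
  have hsup : p.support = vi :: t := p.support_eq_cons
  have htl : t.length = l := by
    have h1 := p.length_support
    rw [hsup, hlen] at h1; simpa using h1
  have hnd : t.Nodup := ((SimpleGraph.Walk.isCycle_def _).1 hc).2.2
  have hlast' : t[l-1]'(by omega) = vi := by
    have h1 := support_getElem_length p
    have h2 := (List.getElem_of_eq hsup
      (by rw [SimpleGraph.Walk.length_support]; omega)).symm.trans h1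
    have h3 := (gcongr_idx (vi :: t) (show p.length = (l-1)+1 by omega)
      (by simp only [List.length_cons, htl]; omega)).symm.trans h2
    rw [List.getElem_cons_succ] at h3
    exact h3
  obtain ⟨W, hsupW, hWlen⟩ :
      ∃ W : (middleGraph k).Walk (lab true vi) (lab true vi),
        W.support = altList true (vi :: (t ++ t)) ∧ W.length = 2*l := by
    refine ⟨lift (p.append p) he, ?_, ?_⟩
    · rw [lift_support, SimpleGraph.Walk.support_append, hsup]
      rfl
    · rw [lift_length, SimpleGraph.Walk.length_append, hlen]; omega
  have hWslen : W.support.length = 2*l+1 := by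
    rw [hsupW, altList_length]
    simp only [List.length_cons, List.length_append, htl]; omega
  have key : ∀ a (ha : a < 2*l+1) (mi : ℕ) (hmi : mi < l)
      (hM : (if a = 0 then l-1 else if a-1 < l then a-1 else a-1-l) = mi),
      W.support[a]'(by omega) = lab (true ^^ decide (a % 2 = 1)) (t[mi]'(by omega)) := by
    intro a ha mi hmi hM
    rw [List.getElem_of_eq hsupW (by omega)]
    rw [altList_getElem _ _ a (by simp only [List.length_cons, List.length_append, htl]; omega)]
    congr 1
    subst hM
    rcases a with _ | a
    · simp only [List.getElem_cons_zero, if_pos rfl]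
      exact hlast'.symm
    · simp only [List.getElem_cons_succ, Nat.succ_ne_zero, if_false, Nat.add_sub_cancel]
      by_cases hal : a < l
      · rw [gcongr_idx t (show (if a < l then a else a - l) = a by rw [if_pos hal]) (by split_ifs <;> omega)]
        exact List.getElem_append_left (by omega)
      · rw [gcongr_idx t (show (if a < l then a else a - l) = a - l by rw [if_neg hal]) (by split_ifs <;> omega)]
        refine (List.getElem_append_right (by omega)).trans ?_
        exact gcongr_idx t (by rw [htl]) (by omega)
  have sup_eq : ∀ a b (ha : a < 2*l+1) (hb : b < 2*l+1),
      W.support[a]'(by omega) = W.support[b]'(by omega) →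
      ((a % 2 = 1) ↔ (b % 2 = 1)) ∧
      (a = b ∨ a + l = b ∨ b + l = a ∨ (a=0∧b=l) ∨ (a=l∧b=0) ∨ (a=0∧b=2*l) ∨ (a=2*l∧b=0)) := by
    intro a b ha hb hab
    have pick : ∀ x, x < 2*l+1 → ∃ mi, (if x = 0 then l-1 else if x-1 < l then x-1 else x-1-l) = mi
        ∧ mi < l ∧ ((x = 0 ∧ mi = l-1) ∨ (1 ≤ x ∧ x ≤ l ∧ mi+1 = x) ∨ (l+1 ≤ x ∧ mi+1+l = x)) := by
      intro x hx
      refine ⟨_, rfl, ?_⟩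
      split_ifs <;> omega
    obtain ⟨ma, hma1, hma2, hma3⟩ := pick a ha
    obtain ⟨mb, hmb1, hmb2, hmb3⟩ := pick b hb
    rw [key a ha ma hma2 hma1, key b hb mb hmb2 hmb1] at hab
    obtain ⟨h1, h2⟩ := lab_inj hab
    constructor
    · simpa [decide_eq_decide] using h1
    · have h3 := hnd.getElem_inj_iff.mp h2
      omega
  have hnodupTail : W.support.tail.Nodup := by
    rw [List.nodup_iff_injective_getElem]
    rintro ⟨a, hA⟩ ⟨b, hB⟩ hEq
    have hTlen : W.support.tail.length = 2*l := by
      rw [List.length_tail, hWslen]; omega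
    rw [hTlen] at hA hB
    simp only [List.getElem_tail] at hEq
    have hd := sup_eq (a+1) (b+1) (by omega) (by omega) hEq
    apply Fin.ext
    show a = b
    omega
  have hTrail : W.IsTrail := by
    rw [SimpleGraph.Walk.isTrail_def, List.nodup_iff_injective_getElem]
    rintro ⟨a, hA⟩ ⟨b, hB⟩ hEq
    have hElen : W.edges.length = 2*l := by
      rw [SimpleGraph.Walk.length_edges, hWlen]
    rw [hElen] at hA hB
    simp only at hEq
    rw [edges_getElem W a (by omega), edges_getElem W b (by omega), Sym2.eq_iff] at hEq
    apply Fin.ext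
    show a = b
    rcases hEq with ⟨e1, e2⟩ | ⟨e1, e2⟩
    · have d1 := sup_eq a b (by omega) (by omega) e1
      have d2 := sup_eq (a+1) (b+1) (by omega) (by omega) e2
      omega
    · have d1 := sup_eq a (b+1) (by omega) (by omega) e1
      have d2 := sup_eq (a+1) b (by omega) (by omega) e2
      omega
  have hne : W ≠ SimpleGraph.Walk.nil := by
    intro h0
    rw [h0] at hWlen
    simp at hWlen
    omega
  refine ⟨W, (SimpleGraph.Walk.isCycle_def _).2 ⟨hTrail, hne, hnodupTail⟩, hWlen,
    fun x => ⟨?_, ?_⟩⟩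
  · intro hx
    rw [hsupW] at hx
    obtain ⟨y, hy, bb, rfl⟩ := mem_altList hx
    refine ⟨y, ?_, bb, rfl⟩
    rw [hsup]
    rcases List.mem_cons.mp hy with h0 | h0
    · simp [h0]
    · rcases List.mem_append.mp h0 with h0 | h0 <;> simp [h0]
  · rintro ⟨y, hy, bb, rfl⟩
    have hyt : y ∈ t := by
      rw [hsup] at hy
      rcases List.mem_cons.mp hy with rfl | h0
      · rw [← hlast']
        exact List.getElem_mem (by omega)
      · exact h0
    obtain ⟨j, hj, rfl⟩ := List.mem_iff_getElem.mp hyt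
    rw [htl] at hj
    have hM1 : (if j+1 = 0 then l-1 else if j+1-1 < l then j+1-1 else j+1-1-l) = j := by
      rw [if_neg (by omega)]
      simp only [Nat.add_sub_cancel]
      rw [if_pos hj]
    have hM2 : (if j+1+l = 0 then l-1 else if j+1+l-1 < l then j+1+l-1 else j+1+l-1-l) = j := by
      rw [if_neg (by omega)]
      have e1 : j+1+l-1 = j+l := by omega
      simp only [e1]
      rw [if_neg (by omega)]
      omega
    by_cases hpar : (true ^^ decide ((j+1) % 2 = 1)) = bb
    · have hk := key (j+1) (by omega) j (by omega) hM1
      rw [← hpar, ← hk]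
      exact List.getElem_mem _
    · have hpar2 : (true ^^ decide ((j+1+l) % 2 = 1)) = bb := by
        rcases Nat.mod_two_eq_zero_or_one (j+1) with h2 | h2 <;>
          · have h3 : (j+1+l) % 2 = 1 - (j+1) % 2 := by omega
            cases bb <;> simp [h2, h3] at hpar ⊢
      have hk := key (j+1+l) (by omega) j (by omega) hM2
      rw [← hpar2, ← hk]
      exact List.getElem_mem _
end TCF

theorem transfer_cycle_factor (k l : ℕ) (hk : 1 ≤ k) (hodd : Odd l) (hl : 3 ≤ l)
    (h : ∃ m, HasCycleFactor (oddGraph k) l m) :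
    ∃ m', HasCycleFactor (middleGraph k) (2*l) m' := by
  obtain ⟨m, v, c, hcyc, hlenc, hcov⟩ := h
  choose W hW using fun i => TCF.cycle_lift hodd hl (c i) (hcyc i) (hlenc i)
  refine ⟨m, fun i => TCF.lab true (v i), fun i => W i, fun i => (hW i).1,
    fun i => (hW i).2.1, ?_⟩
  intro x
  obtain ⟨y, bx, hxy⟩ : ∃ (y : TCF.VO k) (bb : Bool), x = TCF.lab bb y := by
    rcases x.2 with hx | hx
    · exact ⟨⟨x.1, hx⟩, true, Subtype.ext rfl⟩
    · refine ⟨⟨x.1ᶜ, ?_⟩, false, ?_⟩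
      · rw [Finset.card_compl, hx]
        simp only [Fintype.card_fin]
        omega
      · exact Subtype.ext (by simp [TCF.lab])
  obtain ⟨i, hi, hiu⟩ := hcov y
  refine ⟨i, ?_, ?_⟩
  · show x ∈ (W i).support
    rw [(hW i).2.2]
    exact ⟨y, hi, bx, hxy⟩
  · intro j hj
    have hj' : x ∈ (W j).support := hj
    rw [(hW j).2.2] at hj'
    obtain ⟨y', hy', b', hb'⟩ := hj'
    have hyy : y' = y := (TCF.lab_inj (hb'.symm.trans hxy)).2
    exact hiu j (hyy ▸ hy')
end
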